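/- arXiv:2603.27688 — 4 statements merged into one kernel-verified Lean document; each statement's English description precedes it below -/
import Mathlib

section
/- Let Ω : Circle × Circle → Circle be a continuous map satisfying Ω(z₁·z₂, w) = Ω(z₁,w)·Ω(z₂,w) and Ω(z, w₁·w₂) = Ω(z,w₁)·Ω(z,w₂) for all inputs, and let θ : Circle → Circle be a continuous map with θ(1) = 1 and θ(z·w) = Ω(z,w)·θ(z)·θ(w) for all z, w ∈ Circle. Then θ is a group homomorphism, i.e. θ(z·w) = θ(z)·θ(w) for all z, w ∈ Circle. -/
open Circle Real

/-- **Quadratic refinements of continuous bicharacters on the circle are characters.**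
If `Ω : Circle × Circle → Circle` is a continuous bicharacter and
`θ : Circle → Circle` is a continuous quadratic refinement of `Ω`
(i.e. `θ 1 = 1` and `θ (z * w) = Ω (z, w) * θ z * θ w`), then `θ` is a
group homomorphism. -/
theorem continuous_quadratic_refinement_circle_is_hom
    (Ω : Circle × Circle → Circle)
    (hΩcont : Continuous Ω)
    (hmul_left : ∀ z₁ z₂ w : Circle, Ω (z₁ * z₂, w) = Ω (z₁, w) * Ω (z₂, w))
    (hmul_right : ∀ z w₁ w₂ : Circle, Ω (z, w₁ * w₂) = Ω (z, w₁) * Ω (z, w₂))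
    (θ : Circle → Circle)
    (hθcont : Continuous θ)
    (hθone : θ 1 = 1)
    (hθquad : ∀ z w : Circle, θ (z * w) = Ω (z, w) * θ z * θ w) :
    ∀ z w : Circle, θ (z * w) = θ z * θ w := by
  -- Ω(1, w) = 1 and Ω(z, 1) = 1
  have hΩ1 : ∀ w : Circle, Ω (1, w) = 1 := by
    intro w
    have h := hmul_left 1 1 w
    rw [one_mul] at h
    exact (right_eq_mul.mp h)
  have hΩ1' : ∀ z : Circle, Ω (z, 1) = 1 := by
    intro z
    have h := hmul_right z 1 1
    rw [one_mul] at h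
    exact (right_eq_mul.mp h)
  -- Ω(z^n, w) = Ω(z, w)^n
  have hpow : ∀ (n : ℕ) (z w : Circle), Ω (z ^ n, w) = Ω (z, w) ^ n := by
    intro n z w
    induction n with
    | zero => simpa using hΩ1 w
    | succ k ih => rw [pow_succ, pow_succ, hmul_left, ih]
  -- Circle is preconnected
  have hsurj : Function.Surjective Circle.exp := fun z => ⟨Complex.arg z, Circle.exp_arg z⟩
  haveI : PreconnectedSpace Circle := hsurj.denseRange.preconnectedSpace Circle.exp.continuous
  -- torsion elements pair trivially
  have key : ∀ (ζ : Circle) (n : ℕ), 0 < n → ζ ^ n = 1 → ∀ w, Ω (ζ, w) = 1 := by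
    intro ζ n hn hζ w
    have hfinC : {z : ℂ | z ^ n = 1}.Finite := by
      apply Set.Finite.subset (Polynomial.nthRoots n (1 : ℂ)).toFinset.finite_toSet
      intro z hz
      exact Finset.mem_coe.mpr (Multiset.mem_toFinset.mpr ((Polynomial.mem_nthRoots hn).mpr hz))
    have hSfin : {x : Circle | x ^ n = 1}.Finite := by
      apply Set.Finite.preimage (f := fun x : Circle => (x : ℂ)) Subtype.coe_injective.injOn
        hfinC |>.subset
      intro x hx
      simp only [Set.mem_preimage, Set.mem_setOf_eq]
      have hcp : ((x : ℂ)) ^ n = ((x ^ n : Circle) : ℂ) := (map_pow Circle.coeHom x n).symm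
      rw [hcp, hx, Circle.coe_one]
    haveI := hSfin.to_subtype
    set S := {x : Circle | x ^ n = 1}
    have hmem : ∀ u : Circle, Ω (ζ, u) ∈ S := by
      intro u
      show Ω (ζ, u) ^ n = 1
      rw [← hpow, hζ]
      exact hΩ1 u
    let f : Circle → S := fun u => ⟨Ω (ζ, u), hmem u⟩
    have hfcont : Continuous f :=
      Continuous.subtype_mk (hΩcont.comp (Continuous.prodMk_right ζ)) _
    have hlc : IsLocallyConstant f := (IsLocallyConstant.iff_continuous f).mpr hfcont
    have h := hlc.apply_eq_of_preconnectedSpace w 1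
    have : Ω (ζ, w) = Ω (ζ, 1) := congrArg Subtype.val h
    rw [this, hΩ1']
  -- dense set of torsion elements
  let φ : ℚ → Circle := fun q => Circle.exp (2 * π * q)
  have hφdense : DenseRange φ := by
    have hg : DenseRange fun t : ℝ => Circle.exp (2 * π * t) := by
      apply Function.Surjective.denseRange
      intro z
      refine ⟨Complex.arg z / (2 * π), ?_⟩
      dsimp only
      rw [mul_div_cancel₀ _ (by positivity : (2 : ℝ) * π ≠ 0)]
      exact Circle.exp_arg z
    exact hg.comp Rat.denseRange_cast
      (Circle.exp.continuous.comp (continuous_const.mul continuous_id))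
  have hexp_pow : ∀ (x : ℝ) (m : ℕ), Circle.exp x ^ m = Circle.exp (m * x) := by
    intro x m
    induction m with
    | zero => simp [Circle.exp_zero]
    | succ k ih => rw [pow_succ, ih, ← Circle.exp_add]; congr 1; push_cast; ring
  have htor : ∀ q : ℚ, ∀ w, Ω (φ q, w) = 1 := by
    intro q w
    refine key (φ q) q.den q.pos ?_ w
    rw [hexp_pow]
    have : ((q.den : ℝ)) * (2 * π * q) = 2 * π * (q.num : ℝ) := by
      have h1 : (q : ℝ) * (q.den : ℝ) = (q.num : ℝ) := by
        exact_mod_cast congrArg (fun x : ℚ => (x : ℝ)) (Rat.mul_den_eq_num q)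
      linear_combination 2 * π * h1
    rw [this]
    exact Circle.exp_two_pi_mul_int q.num
  -- conclude Ω ≡ 1
  have hΩtriv : ∀ z w : Circle, Ω (z, w) = 1 := by
    intro z w
    have hfun : (fun z : Circle => Ω (z, w)) = fun _ => 1 := by
      apply Continuous.ext_on hφdense
        (hΩcont.comp (continuous_id.prodMk continuous_const)) continuous_const
      intro x hx
      obtain ⟨q, rfl⟩ := hx
      exact htor q w
    exact congrFun hfun z
  intro z w
  rw [hθquad, hΩtriv, one_mul]
end

section
/- Let k be a positive even integer, L a symmetric m×m integer matrix, and A an m×m integer matrix whose determinant is a unit in ℤ (i.e. det A = ±1). Then ∑_{g ∈ {0,…,k−1}^m} exp((π i/k) · gᵀ (Aᵀ L A) g) = ∑_{g ∈ {0,…,k−1}^m} exp((π i/k) · gᵀ L g). -/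
open Matrix

section Aux

variable (k : ℕ)

/-- Reduction mod `k` of `A *ᵥ g` as a map on `Fin m → Fin k`. -/
def kirbyPhi (hk : 0 < k) {m : ℕ} (A : Matrix (Fin m) (Fin m) ℤ)
    (g : Fin m → Fin k) : Fin m → Fin k :=
  fun i => ⟨((A.mulVec fun j => ((g j : ℕ) : ℤ)) i % (k : ℤ)).toNat, by
    have h1 : 0 ≤ (A.mulVec fun j => ((g j : ℕ) : ℤ)) i % (k : ℤ) :=
      Int.emod_nonneg _ (by exact_mod_cast hk.ne')
    have h2 : (A.mulVec fun j => ((g j : ℕ) : ℤ)) i % (k : ℤ) < (k : ℤ) :=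
      Int.emod_lt_of_pos _ (by exact_mod_cast hk)
    omega⟩

lemma kirbyPhi_coe (hk : 0 < k) {m : ℕ} (A : Matrix (Fin m) (Fin m) ℤ)
    (g : Fin m → Fin k) (i : Fin m) :
    (((kirbyPhi k hk A g i : ℕ) : ℤ)) =
      (A.mulVec fun j => ((g j : ℕ) : ℤ)) i % (k : ℤ) := by
  simp only [kirbyPhi]
  exact Int.toNat_of_nonneg (Int.emod_nonneg _ (by exact_mod_cast hk.ne'))

lemma dvd_dotProduct' {m : ℕ} (d : ℤ) (w v : Fin m → ℤ) (h : ∀ i, d ∣ w i) :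
    d ∣ w ⬝ᵥ v :=
  Finset.dvd_sum fun i _ => Dvd.dvd.mul_right (h i) _

lemma dvd_mulVec' {m : ℕ} (d : ℤ) (M : Matrix (Fin m) (Fin m) ℤ) (w : Fin m → ℤ)
    (h : ∀ i, d ∣ w i) (i : Fin m) : d ∣ M.mulVec w i := by
  simp only [Matrix.mulVec, dotProduct]
  exact Finset.dvd_sum fun j _ => Dvd.dvd.mul_left (h j) _

lemma emod_sub_self_dvd (a : ℤ) : (k : ℤ) ∣ a % (k : ℤ) - a := by
  have := Int.emod_def a (k : ℤ)   -- maybe name differs; will check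
  exact ⟨-(a / (k : ℤ)), by rw [this]; ring⟩

lemma kirbyPhi_leftInv (hk : 0 < k) {m : ℕ}
    (M N : Matrix (Fin m) (Fin m) ℤ) (h : N * M = 1) (g : Fin m → Fin k) :
    kirbyPhi k hk N (kirbyPhi k hk M g) = g := by
  funext i
  apply Fin.ext
  have hcong : ∀ j, (k : ℤ) ∣
      (((kirbyPhi k hk M g j : ℕ) : ℤ) - (M.mulVec fun l => ((g l : ℕ) : ℤ)) j) := by
    intro j
    rw [kirbyPhi_coe]
    exact emod_sub_self_dvd k _
  have hdvd : (k : ℤ) ∣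
      (N.mulVec fun j => ((kirbyPhi k hk M g j : ℕ) : ℤ)) i
        - ((g i : ℕ) : ℤ) := by
    have heq :
        (N.mulVec fun j => ((kirbyPhi k hk M g j : ℕ) : ℤ)) i - ((g i : ℕ) : ℤ)
          = N.mulVec (fun j => ((kirbyPhi k hk M g j : ℕ) : ℤ)
              - (M.mulVec fun l => ((g l : ℕ) : ℤ)) j) i := by
      have : N.mulVec ((fun j => ((kirbyPhi k hk M g j : ℕ) : ℤ))
              - (M.mulVec fun l => ((g l : ℕ) : ℤ)))
          = N.mulVec (fun j => ((kirbyPhi k hk M g j : ℕ) : ℤ))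
              - N.mulVec (M.mulVec fun l => ((g l : ℕ) : ℤ)) :=
        Matrix.mulVec_sub N _ _
      have h2 : N.mulVec (M.mulVec fun l => ((g l : ℕ) : ℤ))
          = fun l => ((g l : ℕ) : ℤ) := by
        rw [Matrix.mulVec_mulVec, h, Matrix.one_mulVec]
      calc (N.mulVec fun j => ((kirbyPhi k hk M g j : ℕ) : ℤ)) i - ((g i : ℕ) : ℤ)
          = (N.mulVec (fun j => ((kirbyPhi k hk M g j : ℕ) : ℤ))
              - N.mulVec (M.mulVec fun l => ((g l : ℕ) : ℤ))) i := by
            simp [h2, Pi.sub_apply]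
        _ = _ := by rw [← this]; rfl
    rw [heq]
    exact dvd_mulVec' _ N _ hcong i
  have h0 : (0 : ℤ) ≤ ((g i : ℕ) : ℤ) := Int.natCast_nonneg _
  have h1 : ((g i : ℕ) : ℤ) < (k : ℤ) := by exact_mod_cast (g i).isLt
  have : (N.mulVec fun j => ((kirbyPhi k hk M g j : ℕ) : ℤ)) i % (k : ℤ)
      = ((g i : ℕ) : ℤ) := by
    obtain ⟨c, hc⟩ := hdvd
    have : (N.mulVec fun j => ((kirbyPhi k hk M g j : ℕ) : ℤ)) i
        = ((g i : ℕ) : ℤ) + (k : ℤ) * c := by linarith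
    rw [this, Int.add_mul_emod_self_left, Int.emod_eq_of_lt h0 h1]
  show ((N.mulVec fun j => ((kirbyPhi k hk M g j : ℕ) : ℤ)) i % (k : ℤ)).toNat
      = (g i : ℕ)
  rw [this]
  simp

lemma exp_congr_mod (hk : 0 < k) {a b : ℤ} (h : (2 * (k : ℤ)) ∣ a - b) :
    Complex.exp ((Real.pi : ℂ) * Complex.I / (k : ℂ) * (a : ℂ))
      = Complex.exp ((Real.pi : ℂ) * Complex.I / (k : ℂ) * (b : ℂ)) := by
  obtain ⟨c, hc⟩ := h
  have ha : (a : ℂ) = (b : ℂ) + 2 * (k : ℂ) * (c : ℂ) := by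
    have : a = b + 2 * (k : ℤ) * c := by linarith
    exact_mod_cast congrArg (Int.cast : ℤ → ℂ) this
  have hk0 : (k : ℂ) ≠ 0 := by exact_mod_cast hk.ne'
  rw [ha, mul_add, Complex.exp_add]
  have : (Real.pi : ℂ) * Complex.I / (k : ℂ) * (2 * (k : ℂ) * (c : ℂ))
      = (c : ℂ) * (2 * (Real.pi : ℂ) * Complex.I) := by
    field_simp
  rw [this, Complex.exp_int_mul_two_pi_mul_I, mul_one]

lemma quad_congr (hke : Even k) {m : ℕ} (L : Matrix (Fin m) (Fin m) ℤ)
    (hL : L.IsSymm) (u v : Fin m → ℤ) (h : ∀ i, (k : ℤ) ∣ u i - v i) :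
    (2 * (k : ℤ)) ∣ u ⬝ᵥ L.mulVec u - v ⬝ᵥ L.mulVec v := by
  set w : Fin m → ℤ := u - v with hw
  have hu : u = v + w := by simp [hw]
  have hwd : ∀ i, (k : ℤ) ∣ w i := h
  have expand : u ⬝ᵥ L.mulVec u - v ⬝ᵥ L.mulVec v
      = 2 * (w ⬝ᵥ L.mulVec v) + w ⬝ᵥ L.mulVec w := by
    have hvm : v ᵥ* L = L *ᵥ v := by
      nth_rewrite 1 [← hL.eq]
      exact Matrix.vecMul_transpose L v
    have hsym : v ⬝ᵥ L.mulVec w = w ⬝ᵥ L.mulVec v := by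
      rw [Matrix.dotProduct_mulVec, hvm]
      exact dotProduct_comm _ _
    rw [hu, Matrix.mulVec_add, dotProduct_add, add_dotProduct,
      add_dotProduct, hsym]
    ring
  rw [expand]
  obtain ⟨t, ht⟩ := hke
  have hk2 : (k : ℤ) = t + t := by exact_mod_cast ht
  apply dvd_add
  · obtain ⟨c, hc⟩ := dvd_dotProduct' (k : ℤ) w (L.mulVec v) hwd
    exact ⟨c, by rw [hc]; ring⟩
  · have h1 : ((k : ℤ) * (k : ℤ)) ∣ w ⬝ᵥ L.mulVec w := by
      have hterm : ∀ i, ((k : ℤ) * (k : ℤ)) ∣ w i * L.mulVec w i :=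
        fun i => mul_dvd_mul (hwd i) (dvd_mulVec' _ L w hwd i)
      simp only [dotProduct]
      exact Finset.dvd_sum fun i _ => hterm i
    obtain ⟨c, hc⟩ := h1
    exact ⟨t * c, by rw [hc, hk2]; ring⟩

end Aux

/-- **Invariance of the level-`k` Gauss sum under the Kirby handle-slide move `K2`.**
For a positive even integer `k`, a symmetric integer matrix `L`, and
`A ∈ GL(m,ℤ)` (i.e. `det A` is a unit), the Gauss sum of `Aᵀ L A` equals that
of `L`. -/
theorem gauss_sum_handle_slide_invariance
    (k : ℕ) (hk : 0 < k) (hke : Even k)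
    (m : ℕ) (L A : Matrix (Fin m) (Fin m) ℤ) (hL : L.IsSymm)
    (hA : IsUnit A.det) :
    (∑ g : Fin m → Fin k,
        Complex.exp ((Real.pi : ℂ) * Complex.I / (k : ℂ) *
          ((((fun i => ((g i : ℕ) : ℤ)) ⬝ᵥ
              (Aᵀ * L * A).mulVec fun i => ((g i : ℕ) : ℤ)) : ℤ) : ℂ)))
      = ∑ g : Fin m → Fin k,
          Complex.exp ((Real.pi : ℂ) * Complex.I / (k : ℂ) *
            ((((fun i => ((g i : ℕ) : ℤ)) ⬝ᵥ
                L.mulVec fun i => ((g i : ℕ) : ℤ)) : ℤ) : ℂ)) := by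
  have hbij : Function.Bijective (kirbyPhi k hk A) := by
    have h1 : A⁻¹ * A = 1 := Matrix.nonsing_inv_mul A hA
    have h2 : A * A⁻¹ = 1 := Matrix.mul_nonsing_inv A hA
    exact Function.bijective_iff_has_inverse.mpr
      ⟨kirbyPhi k hk A⁻¹, kirbyPhi_leftInv k hk A A⁻¹ h1,
        kirbyPhi_leftInv k hk A⁻¹ A h2⟩
  refine Fintype.sum_bijective _ hbij _ _ ?_
  intro g
  set gz : Fin m → ℤ := fun i => ((g i : ℕ) : ℤ) with hgz
  set u : Fin m → ℤ := A.mulVec gz with hu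
  set v : Fin m → ℤ := fun i => ((kirbyPhi k hk A g i : ℕ) : ℤ) with hv
  have hform : gz ⬝ᵥ (Aᵀ * L * A).mulVec gz = u ⬝ᵥ L.mulVec u := by
    rw [hu, ← Matrix.mulVec_mulVec, ← Matrix.mulVec_mulVec,
      Matrix.dotProduct_mulVec, Matrix.vecMul_transpose, Matrix.mulVec_mulVec]
  have hcong : ∀ i, (k : ℤ) ∣ u i - v i := by
    intro i
    rw [hv]
    simp only [kirbyPhi_coe k hk A g i]
    exact dvd_sub_comm.mp (emod_sub_self_dvd k ((A.mulVec gz) i))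
  have := quad_congr k hke L hL u v hcong
  rw [hform]
  exact exp_congr_mod k hk this
end

section
/- Let k be a positive even integer, L a symmetric m×m integer matrix with signature σ(L), and ε ∈ {1, −1}. Let L' be the (m+1)×(m+1) block-diagonal matrix with blocks L and the 1×1 matrix (ε). Then k^{−(m+2)/2} · exp(−π i (σ(L)+ε)/4) · ∑_{g ∈ {0,…,k−1}^{m+1}} exp((π i/k)·gᵀ L' g) = k^{−(m+1)/2} · exp(−π i σ(L)/4) · ∑_{g ∈ {0,…,k−1}^m} exp((π i/k)·gᵀ L g). -/
open Matrix

/-- The signature of a symmetric integer matrix: the number of positive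
eigenvalues minus the number of negative eigenvalues of the associated real
symmetric matrix. -/
noncomputable def intSignature {n : Type*} [Fintype n] [DecidableEq n]
    (L : Matrix n n ℤ) : ℤ :=
  if h : (L.map (Int.cast : ℤ → ℝ)).IsHermitian then
    ((Finset.univ.filter fun i => 0 < h.eigenvalues i).card : ℤ)
      - ((Finset.univ.filter fun i => h.eigenvalues i < 0).card : ℤ)
  else 0


section GaussAuxSection
open Complex Real Filter Topology

noncomputable section
namespace GaussAux

lemma ofReal_mul_cpow {r : ℝ} (hr : 0 < r) {z : ℂ} (hz : z ≠ 0) (s : ℂ) :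
    ((r : ℂ) * z) ^ s = (r : ℂ) ^ s * z ^ s := by
  have hr' : (r : ℂ) ≠ 0 := ofReal_ne_zero.mpr hr.ne'
  rw [cpow_def_of_ne_zero (mul_ne_zero hr' hz), cpow_def_of_ne_zero hr', cpow_def_of_ne_zero hz,
    Complex.log_ofReal_mul hr hz, add_mul, Complex.exp_add, Complex.ofReal_log hr.le]

lemma theta_fe (τ : ℂ) : jacobiTheta τ =
    1 / (-I * τ) ^ (1 / 2 : ℂ) * jacobiTheta (-1 / τ) := by
  simp_rw [jacobiTheta_eq_jacobiTheta₂]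
  have h := jacobiTheta₂_functional_equation 0 τ
  simpa using h

lemma theta_even_add (n : ℕ) (τ : ℂ) : jacobiTheta (2 * n + τ) = jacobiTheta τ := by
  induction n with
  | zero => simp
  | succ n ih =>
      have : (2 * (n + 1 : ℕ) : ℂ) + τ = 2 + ((2 * n : ℕ) + τ) := by push_cast; ring
      rw [this, jacobiTheta_two_add]
      simpa using ih

lemma sqrt_cpow_half (a : ℝ) (ha : 0 ≤ a) :
    ((a : ℂ)) ^ (1/2 : ℂ) = ((Real.sqrt a : ℝ) : ℂ) := by
  rw [Real.sqrt_eq_rpow, Complex.ofReal_cpow ha]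
  norm_num

lemma bound_tendsto_zero :
    Tendsto (fun s : ℝ => 2 / (1 - Real.exp (-π * s)) * Real.exp (-π * s)) atTop (𝓝 0) := by
  have h1 : Tendsto (fun s : ℝ => Real.exp (-π * s)) atTop (𝓝 0) := by
    have : Tendsto (fun s : ℝ => π * s) atTop atTop :=
      Tendsto.const_mul_atTop Real.pi_pos tendsto_id
    simpa [neg_mul, Real.exp_neg, Function.comp_def] using
      (Real.tendsto_exp_neg_atTop_nhds_zero.comp this)
  have h2 : Tendsto (fun s : ℝ => 2 / (1 - Real.exp (-π * s))) atTop (𝓝 (2 / (1 - 0))) :=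
    tendsto_const_nhds.div (tendsto_const_nhds.sub h1) (by norm_num)
  simpa using h2.mul h1

lemma tendsto_theta_one (x : ℝ) :
    Tendsto (fun s : ℝ => jacobiTheta ((x : ℂ) + I * s)) atTop (𝓝 1) := by
  rw [← tendsto_sub_nhds_zero_iff]
  apply squeeze_zero_norm' _ bound_tendsto_zero
  filter_upwards [eventually_gt_atTop 0] with s hs
  have him : ((x : ℂ) + I * s).im = s := by simp
  have := norm_jacobiTheta_sub_one_le (τ := (x : ℂ) + I * s) (by rw [him]; exact hs)
  rwa [him] at this

lemma hasSum_int_geom_bound {r : ℝ} (h0 : 0 ≤ r) (h1 : r < 1) :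
    HasSum (fun n : ℤ => if n = 0 then (0 : ℝ) else r ^ n.natAbs)
      (2 * (r / (1 - r))) := by
  have hg : HasSum (fun n : ℕ => r ^ n) (1 - r)⁻¹ := hasSum_geometric_of_lt_one h0 h1
  have hng : HasSum (fun n : ℕ => r ^ (n + 1)) (r / (1 - r)) := by
    have h := hg.mul_left r
    simp_rw [← pow_succ'] at h
    rwa [div_eq_mul_inv]
  have hnat : HasSum (fun n : ℕ => if (n : ℤ) = 0 then (0:ℝ) else r ^ (n : ℤ).natAbs)
      (r / (1 - r)) := by
    have hd := hg.sub (hasSum_ite_eq (0 : ℕ) (1 : ℝ))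
    have he : (fun n : ℕ => r ^ n - if n = 0 then (1:ℝ) else 0)
        = fun n : ℕ => if (n : ℤ) = 0 then (0:ℝ) else r ^ (n : ℤ).natAbs := by
      funext n
      rcases Nat.eq_zero_or_pos n with rfl | hn
      · simp
      · have h' : n ≠ 0 := hn.ne'
        have h'' : (n : ℤ) ≠ 0 := by exact_mod_cast h'
        simp [h', h'']
    rw [he] at hd
    convert hd using 1
    · rfl
    have hne : (1:ℝ) - r ≠ 0 := by linarith
    rw [eq_sub_iff_add_eq, div_add_one hne, inv_eq_one_div]; congr 1; ring
  have hneg : HasSum (fun n : ℕ => if (-(n+1) : ℤ) = 0 then (0:ℝ)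
      else r ^ (-(n+1) : ℤ).natAbs) (r / (1 - r)) := by
    have he : (fun n : ℕ => if (-(n+1) : ℤ) = 0 then (0:ℝ) else r ^ (-(n+1) : ℤ).natAbs)
        = fun n : ℕ => r ^ (n + 1) := by
      funext n
      have h1' : (-(n+1) : ℤ) ≠ 0 := by omega
      have h2' : (-(n+1) : ℤ).natAbs = n + 1 := by
        rw [Int.natAbs_neg]; exact_mod_cast Int.natAbs_natCast (n+1)
      rw [if_neg h1', h2']
    rw [he]; exact hng
  have := HasSum.of_nat_of_neg_add_one (f := fun n : ℤ => if n = 0 then (0:ℝ) else r ^ n.natAbs) hnat hneg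
  convert this using 1
  ring

lemma norm_theta₂_real_sub_one_le (x : ℝ) {s : ℝ} (hs : 0 < s) :
    ‖jacobiTheta₂ (x : ℂ) (I * s) - 1‖ ≤ 2 * (Real.exp (-π * s) / (1 - Real.exp (-π * s))) := by
  set r : ℝ := Real.exp (-π * s) with hr
  have hr0 : 0 ≤ r := (Real.exp_pos _).le
  have hr1 : r < 1 := by
    rw [hr, Real.exp_lt_one_iff]
    nlinarith [Real.pi_pos]
  have him : (I * (s : ℂ)).im = s := by simp
  have ht : HasSum (fun n : ℤ => jacobiTheta₂_term n (x : ℂ) (I * s))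
      (jacobiTheta₂ (x : ℂ) (I * s)) := hasSum_jacobiTheta₂_term _ (by rw [him]; exact hs)
  have hone : HasSum (fun n : ℤ => if n = 0 then (1:ℂ) else 0) 1 := hasSum_ite_eq (0 : ℤ) 1
  have hsub := ht.sub hone
  have hbs : HasSum (fun n : ℤ => if n = 0 then (0:ℝ) else r ^ n.natAbs)
      (2 * (r / (1 - r))) := hasSum_int_geom_bound hr0 hr1
  have hbound : ∀ n : ℤ, ‖jacobiTheta₂_term n (x : ℂ) (I * s) - if n = 0 then (1:ℂ) else 0‖
      ≤ (if n = 0 then (0:ℝ) else r ^ n.natAbs) := by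
    intro n
    rcases eq_or_ne n 0 with rfl | hn
    · simp [jacobiTheta₂_term]
    · have hnorm : ‖jacobiTheta₂_term n (x : ℂ) (I * s)‖ = Real.exp (-π * n^2 * s) := by
        rw [norm_jacobiTheta₂_term, him]
        norm_num
      have habs : ((n.natAbs : ℝ)) = |(n:ℝ)| := by
        rw [Nat.cast_natAbs]; push_cast; ring
      have h1abs : (1:ℝ) ≤ |(n:ℝ)| := by
        have : (1:ℤ) ≤ |n| := Int.one_le_abs (by exact_mod_cast hn)
        calc (1:ℝ) ≤ ((|n| : ℤ) : ℝ) := by exact_mod_cast this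
          _ = |(n:ℝ)| := by push_cast; ring
      have h1' : ((n.natAbs : ℝ)) ≤ (n:ℝ)^2 := by
        rw [habs, ← _root_.sq_abs]
        nlinarith
      have hle : Real.exp (-π * n^2 * s) ≤ r ^ n.natAbs := by
        rw [hr, ← Real.exp_nat_mul, Real.exp_le_exp]
        have h2 := mul_le_mul_of_nonneg_right h1' (mul_nonneg Real.pi_pos.le hs.le)
        nlinarith [h2]
      simp only [if_neg hn]
      rw [sub_zero, hnorm]
      exact hle
  calc ‖jacobiTheta₂ (x : ℂ) (I * s) - 1‖ = ‖∑' n : ℤ, (jacobiTheta₂_term n (x : ℂ) (I * s)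
        - if n = 0 then (1:ℂ) else 0)‖ := by rw [hsub.tsum_eq]
    _ ≤ 2 * (r / (1 - r)) := tsum_of_norm_bounded hbs hbound

lemma tendsto_theta₂_one (x : ℝ) :
    Tendsto (fun s : ℝ => jacobiTheta₂ (x : ℂ) (I * s)) atTop (𝓝 1) := by
  rw [← tendsto_sub_nhds_zero_iff]
  have hb : Tendsto (fun s : ℝ => 2 * (Real.exp (-π * s) / (1 - Real.exp (-π * s))))
      atTop (𝓝 0) := by
    have h1 : Tendsto (fun s : ℝ => Real.exp (-π * s)) atTop (𝓝 0) := by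
      have : Tendsto (fun s : ℝ => π * s) atTop atTop :=
        Tendsto.const_mul_atTop Real.pi_pos tendsto_id
      simpa [neg_mul, Real.exp_neg, Function.comp_def] using (Real.tendsto_exp_neg_atTop_nhds_zero.comp this)
    have h2 : Tendsto (fun s : ℝ => Real.exp (-π * s) / (1 - Real.exp (-π * s)))
        atTop (𝓝 (0 / (1 - 0))) := h1.div (tendsto_const_nhds.sub h1) (by norm_num)
    simpa using h2.const_mul 2
  apply squeeze_zero_norm' _ hb
  filter_upwards [eventually_gt_atTop 0] with s hs
  exact norm_theta₂_real_sub_one_le x hs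

lemma keyB (k : ℕ) (hk : 0 < k) (hke : Even k) {t : ℝ} (ht : 0 < t) :
    ((k : ℂ) * ((Real.sqrt t : ℝ) : ℂ)) * jacobiTheta (((k:ℂ))⁻¹ + I * t)
      = ∑ r : Fin k, Complex.exp (π * I * ((r:ℕ):ℂ)^2 / k) *
          jacobiTheta₂ (((((r:ℕ):ℝ) / k : ℝ)) : ℂ) (I * ((1/(k^2*t) : ℝ) : ℂ)) := by
  haveI : NeZero k := ⟨hk.ne'⟩
  obtain ⟨c, hc⟩ := hke
  have hkR : (0:ℝ) < k := by exact_mod_cast hk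
  have hkC : (k:ℂ) ≠ 0 := by exact_mod_cast hk.ne'
  have htC : (t:ℂ) ≠ 0 := by exact_mod_cast ht.ne'
  set τ₁ : ℂ := ((k:ℂ))⁻¹ + I * t with hτ₁def
  have hτ₁im : τ₁.im = t := by simp [hτ₁def]
  have hθ : HasSum (fun n : ℤ => Complex.exp (π * I * (n:ℂ)^2 * τ₁)) (jacobiTheta τ₁) := by
    have h := hasSum_jacobiTheta₂_term 0 (τ := τ₁) (by rw [hτ₁im]; exact ht)
    rw [← jacobiTheta_eq_jacobiTheta₂] at h
    refine h.congr_fun fun n => ?_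
    simp [jacobiTheta₂_term]
  have hprod : HasSum (fun p : Fin k × ℤ =>
      Complex.exp (π * I * (((p.2 * k + (p.1:ℕ) : ℤ)):ℂ)^2 * τ₁)) (jacobiTheta τ₁) := by
    have h := ((Equiv.prodComm (Fin k) ℤ).trans (Int.divModEquiv k).symm).hasSum_iff.mpr hθ
    refine h.congr_fun fun p => ?_
    simp [Int.divModEquiv, Equiv.prodComm]
  have hinner : ∀ r : Fin k, HasSum
      (fun q : ℤ => Complex.exp (π * I * (((q * k + (r:ℕ) : ℤ)):ℂ)^2 * τ₁))
      ((Complex.exp (π * I * ((r:ℕ):ℂ)^2 / k) * Complex.exp (-(π:ℂ) * ((r:ℕ):ℂ)^2 * t)) *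
        jacobiTheta₂ (I * (((((r:ℕ):ℝ) * k * t : ℝ)):ℂ)) (I * ((((k:ℝ)^2 * t : ℝ)):ℂ))) := by
    intro r
    have him : (I * ((((k:ℝ)^2 * t : ℝ)):ℂ)).im = (k:ℝ)^2 * t := by
      rw [Complex.mul_im]
      simp only [Complex.I_re, Complex.I_im, Complex.ofReal_re, Complex.ofReal_im]
      ring
    have hbase := hasSum_jacobiTheta₂_term (I * (((((r:ℕ):ℝ) * k * t : ℝ)):ℂ))
      (τ := I * ((((k:ℝ)^2 * t : ℝ)):ℂ)) (by rw [him]; positivity)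
    have h2 := hbase.mul_left
      (Complex.exp (π * I * ((r:ℕ):ℂ)^2 / k) * Complex.exp (-(π:ℂ) * ((r:ℕ):ℂ)^2 * t))
    refine h2.congr_fun fun q => ?_
    rw [jacobiTheta₂_term, ← Complex.exp_add, ← Complex.exp_add]
    have hj : Complex.exp ((q^2 * c + q * (r:ℕ) : ℤ) * (2 * π * I)) = 1 :=
      Complex.exp_int_mul_two_pi_mul_I _
    rw [show π * I * (((q * k + (r:ℕ) : ℤ)):ℂ)^2 * τ₁
        = (π * I * ((r:ℕ):ℂ)^2 / k + -(π:ℂ) * ((r:ℕ):ℂ)^2 * t +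
            (2 * π * I * q * (I * (((((r:ℕ):ℝ) * k * t : ℝ)):ℂ)) +
              π * I * q^2 * (I * ((((k:ℝ)^2 * t : ℝ)):ℂ)))) +
          ((q^2 * c + q * (r:ℕ) : ℤ) * (2 * π * I)) from ?_]
    · rw [Complex.exp_add, hj, mul_one]
    · have hkc : (k:ℂ) = 2 * c := by
        have : (k:ℕ) = 2 * c := by omega
        exact_mod_cast this
      rw [hτ₁def]
      push_cast
      rw [hkc]
      have hcC : (c:ℂ) ≠ 0 := by
        have : c ≠ 0 := by omega
        exact_mod_cast this
      field_simp
      ring_nf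
      simp only [I_sq]
      ring
  have hfib := hprod.prod_fiberwise hinner
  have hsum : jacobiTheta τ₁ = ∑ r : Fin k,
      (Complex.exp (π * I * ((r:ℕ):ℂ)^2 / k) * Complex.exp (-(π:ℂ) * ((r:ℕ):ℂ)^2 * t)) *
        jacobiTheta₂ (I * (((((r:ℕ):ℝ) * k * t : ℝ)):ℂ)) (I * ((((k:ℝ)^2 * t : ℝ)):ℂ)) :=
    hfib.unique (hasSum_fintype _)
  have hkt : ((k:ℂ) * ((Real.sqrt t : ℝ):ℂ)) ≠ 0 := by
    have h1 : Real.sqrt t ≠ 0 := by positivity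
    exact mul_ne_zero hkC (Complex.ofReal_ne_zero.mpr h1)
  have hIb : (I * ((((k:ℝ)^2 * t : ℝ)):ℂ)) ≠ 0 := by
    have : ((k:ℝ)^2 * t : ℝ) ≠ 0 := by positivity
    exact mul_ne_zero I_ne_zero (Complex.ofReal_ne_zero.mpr this)
  have hfe : ∀ r : Fin k, jacobiTheta₂ (I * (((((r:ℕ):ℝ) * k * t : ℝ)):ℂ))
        (I * ((((k:ℝ)^2 * t : ℝ)):ℂ))
      = (((k:ℂ) * ((Real.sqrt t : ℝ):ℂ)))⁻¹ * Complex.exp ((π:ℂ) * ((r:ℕ):ℂ)^2 * t) *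
          jacobiTheta₂ (((((r:ℕ):ℝ) / k : ℝ)) : ℂ) (I * ((1/(k^2*t) : ℝ) : ℂ)) := by
    intro r
    have h := jacobiTheta₂_functional_equation (I * (((((r:ℕ):ℝ) * k * t : ℝ)):ℂ))
      (I * ((((k:ℝ)^2 * t : ℝ)):ℂ))
    have e1 : -I * (I * ((((k:ℝ)^2 * t : ℝ)):ℂ)) = ((((k:ℝ)^2 * t : ℝ)):ℂ) := by
      rw [show -I * (I * ((((k:ℝ)^2 * t : ℝ)):ℂ)) = -(I*I) * ((((k:ℝ)^2 * t : ℝ)):ℂ) by ring,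
        Complex.I_mul_I]
      ring
    have e2 : (-I * (I * ((((k:ℝ)^2 * t : ℝ)):ℂ))) ^ (1/2 : ℂ)
        = ((k:ℂ) * ((Real.sqrt t : ℝ):ℂ)) := by
      rw [e1, sqrt_cpow_half _ (by positivity), Real.sqrt_mul (by positivity),
        Real.sqrt_sq hkR.le]
      push_cast; ring
    have e3 : -(π:ℂ) * I * (I * (((((r:ℕ):ℝ) * k * t : ℝ)):ℂ))^2 / (I * ((((k:ℝ)^2 * t : ℝ)):ℂ))
        = (π:ℂ) * ((r:ℕ):ℂ)^2 * t := by
      rw [mul_pow, I_sq, div_eq_iff hIb]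
      push_cast
      ring
    have e4 : (I * (((((r:ℕ):ℝ) * k * t : ℝ)):ℂ)) / (I * ((((k:ℝ)^2 * t : ℝ)):ℂ))
        = (((((r:ℕ):ℝ) / k : ℝ)) : ℂ) := by
      rw [div_eq_iff hIb]
      push_cast
      field_simp
    have e5 : -1 / (I * ((((k:ℝ)^2 * t : ℝ)):ℂ)) = I * ((1/(k^2*t) : ℝ) : ℂ) := by
      rw [div_eq_iff hIb]
      push_cast
      rw [show I * (1/((k:ℂ)^2*t)) * (I * ((k:ℂ)^2*t)) = (I*I) * (((k:ℂ)^2*t)/((k:ℂ)^2*t)) by ring,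
        Complex.I_mul_I, div_self (mul_ne_zero (pow_ne_zero 2 hkC) htC)]
      ring
    rw [h, e2, e3, e4, e5, one_div]
  rw [hsum, Finset.mul_sum]
  refine Finset.sum_congr rfl fun r _ => ?_
  rw [hfe r]
  have hE : Complex.exp (-(π:ℂ) * ((r:ℕ):ℂ)^2 * t) * Complex.exp ((π:ℂ) * ((r:ℕ):ℂ)^2 * t)
      = 1 := by
    rw [← Complex.exp_add, show -(π:ℂ) * ((r:ℕ):ℂ)^2 * t + (π:ℂ) * ((r:ℕ):ℂ)^2 * t = 0 by ring,
      Complex.exp_zero]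
  rw [show ((k:ℂ) * ((Real.sqrt t : ℝ):ℂ)) *
      (Complex.exp (π * I * ((r:ℕ):ℂ)^2 / k) * Complex.exp (-(π:ℂ) * ((r:ℕ):ℂ)^2 * t) *
        ((((k:ℂ) * ((Real.sqrt t : ℝ):ℂ)))⁻¹ * Complex.exp ((π:ℂ) * ((r:ℕ):ℂ)^2 * t) *
          jacobiTheta₂ (((((r:ℕ):ℝ) / k : ℝ)) : ℂ) (I * ((1/(k^2*t) : ℝ) : ℂ))))
      = (Complex.exp (-(π:ℂ) * ((r:ℕ):ℂ)^2 * t) * Complex.exp ((π:ℂ) * ((r:ℕ):ℂ)^2 * t)) *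
        (((k:ℂ) * ((Real.sqrt t : ℝ):ℂ)) * (((k:ℂ) * ((Real.sqrt t : ℝ):ℂ)))⁻¹) *
        (Complex.exp (π * I * ((r:ℕ):ℂ)^2 / k) *
          jacobiTheta₂ (((((r:ℕ):ℝ) / k : ℝ)) : ℂ) (I * ((1/(k^2*t) : ℝ) : ℂ))) by ring,
    hE, mul_inv_cancel₀ hkt, one_mul, one_mul]

lemma keyA (k : ℕ) (hk : 0 < k) (hke : Even k) {t : ℝ} (ht : 0 < t) :
    ((k : ℂ) * ((Real.sqrt t : ℝ) : ℂ)) * jacobiTheta (((k:ℂ))⁻¹ + I * t)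
      = ((-I * (((k:ℂ))⁻¹ + I * t)) ^ (1/2 : ℂ))⁻¹ *
        (((1 + I * ((k:ℂ) * t))⁻¹) ^ (1/2 : ℂ))⁻¹ *
        jacobiTheta (((-(1/k) : ℝ) : ℂ) + I * ((1/(k^2*t) : ℝ) : ℂ)) := by
  obtain ⟨c, hc⟩ := hke
  have hkR : (0:ℝ) < k := by exact_mod_cast hk
  have hkC : (k:ℂ) ≠ 0 := by exact_mod_cast hk.ne'
  have htC : (t:ℂ) ≠ 0 := by exact_mod_cast ht.ne'
  set τ₁ : ℂ := ((k:ℂ))⁻¹ + I * t with hτ₁def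
  have hτ₁ : τ₁ ≠ 0 := by
    intro h
    have : τ₁.im = t := by simp [hτ₁def]
    rw [h] at this
    simp at this
    exact ht.ne this
  have hw : (1 + I * ((k:ℂ) * t)) ≠ 0 := by
    intro h
    have : (1 + I * ((k:ℂ) * t)).im = (k:ℝ) * t := by
      simp [Complex.mul_im]
    rw [h] at this
    simp at this
    rcases this with h' | h'
    · exact hk.ne' h'
    · exact ht.ne' h'
  have hw' : (1 + (k:ℂ) * I * (t:ℂ)) ≠ 0 := by
    intro h; apply hw; rw [← h]; ring
  set u : ℂ := I * ((k:ℂ)^2 * t) * (1 + I * ((k:ℂ) * t))⁻¹ with hudef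
  have hu_ne : u ≠ 0 := by
    apply mul_ne_zero (mul_ne_zero I_ne_zero (mul_ne_zero (pow_ne_zero 2 hkC) htC))
    exact inv_ne_zero hw
  -- step 1 : θ τ₁ = (-I τ₁)^(-1/2) θ(-1/τ₁)
  have h1 := theta_fe τ₁
  -- step 2 : -1/τ₁ + k = u, i.e. θ(-1/τ₁) = θ u
  have h2 : jacobiTheta (-1/τ₁) = jacobiTheta u := by
    have hku : (2 * (c:ℂ)) + (-1/τ₁) = u := by
      have hkc : (k:ℂ) = 2 * c := by
        have : (k:ℕ) = 2 * c := by omega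
        exact_mod_cast this
      rw [hudef, ← hkc, hτ₁def]
      have hsplit : ((k:ℂ))⁻¹ + I*(t:ℂ) = (1 + I*((k:ℂ)*t))/k := by
        rw [eq_div_iff hkC, add_mul, inv_mul_cancel₀ hkC]; ring
      rw [hsplit, ← div_eq_mul_inv, eq_div_iff hw, neg_div, one_div_div]
      field_simp
      ring
    rw [← hku]
    exact (theta_even_add c (-1/τ₁)).symm
  -- step 3 : θ u = (-I u)^(-1/2) θ(-1/u)
  have h3 := theta_fe u
  -- step 4 : -1/u = -(1/k) + I/(k²t)
  have h4 : -1/u = ((-(1/k) : ℝ) : ℂ) + I * ((1/(k^2*t) : ℝ) : ℂ) := by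
    have hX : (((-(1/k) : ℝ) : ℂ) + I * ((1/(k^2*t) : ℝ) : ℂ)) * u = -1 := by
      rw [hudef]
      push_cast
      simp only [← mul_assoc]
      rw [← div_eq_mul_inv, div_eq_iff (show 1 + I * (k:ℂ) * (t:ℂ) ≠ 0 by
        intro h; apply hw; rw [← h]; ring)]
      field_simp
      ring_nf
      simp only [I_sq]
      ring
    exact ((eq_div_iff hu_ne).mpr hX).symm
  -- step 5 : (-I u)^(1/2) = (k √t) * ((1+Ikt)⁻¹)^(1/2)
  have h5 : (-I * u) ^ (1/2 : ℂ)
      = ((k:ℂ) * ((Real.sqrt t : ℝ):ℂ)) * ((1 + I * ((k:ℂ) * t))⁻¹) ^ (1/2 : ℂ) := by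
    have e1 : -I * u = ((((k:ℝ)^2 * t : ℝ)):ℂ) * (1 + I * ((k:ℂ) * t))⁻¹ := by
      rw [hudef]
      push_cast
      rw [show -I * (I * ((k:ℂ)^2 * t) * (1 + I * ((k:ℂ) * t))⁻¹)
          = -(I*I) * (((k:ℂ)^2 * t) * (1 + I * ((k:ℂ) * t))⁻¹) by ring, Complex.I_mul_I]
      ring
    rw [e1, ofReal_mul_cpow (by positivity) (inv_ne_zero hw),
      sqrt_cpow_half _ (by positivity), Real.sqrt_mul (by positivity), Real.sqrt_sq hkR.le]
    push_cast
    ring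
  -- assemble
  rw [h1, h2, h3, h4, h5]
  have hne1 : ((-I * τ₁) ^ (1/2 : ℂ)) ≠ 0 := by
    rw [Ne, cpow_eq_zero_iff, not_and_or]
    exact Or.inl (mul_ne_zero (neg_ne_zero.mpr I_ne_zero) hτ₁)
  have hne2 : (((1 + I * ((k:ℂ) * t))⁻¹) ^ (1/2 : ℂ)) ≠ 0 := by
    rw [Ne, cpow_eq_zero_iff, not_and_or]
    exact Or.inl (inv_ne_zero hw)
  have hkt : ((k:ℂ) * ((Real.sqrt t : ℝ):ℂ)) ≠ 0 := by
    have h1' : Real.sqrt t ≠ 0 := by positivity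
    exact mul_ne_zero hkC (Complex.ofReal_ne_zero.mpr h1')
  have hst : ((Real.sqrt t : ℝ):ℂ) ≠ 0 := Complex.ofReal_ne_zero.mpr (by positivity)
  field_simp


lemma gauss_sum_pos (k : ℕ) (hk : 0 < k) (hke : Even k) :
    ∑ r : Fin k, Complex.exp (π * I * ((r:ℕ):ℂ)^2 / k)
      = ((Real.sqrt k : ℝ) : ℂ) * Complex.exp (π * I / 4) := by
  have hkR : (0:ℝ) < k := by exact_mod_cast hk
  have hkC : (k:ℂ) ≠ 0 := by exact_mod_cast hk.ne'
  -- the auxiliary scale parameter tends to infinity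
  have hs' : Tendsto (fun t : ℝ => 1/((k:ℝ)^2*t)) (𝓝[>] (0:ℝ)) atTop := by
    have h0 : Tendsto (fun t : ℝ => t⁻¹) (𝓝[>] (0:ℝ)) atTop := tendsto_inv_nhdsGT_zero
    have h1 := h0.atTop_div_const (show (0:ℝ) < (k:ℝ)^2 by positivity)
    refine h1.congr fun t => ?_
    rw [div_eq_mul_inv, one_div, mul_inv]
    ring
  set Φ : ℝ → ℂ := fun t =>
    ((k : ℂ) * ((Real.sqrt t : ℝ) : ℂ)) * jacobiTheta (((k:ℂ))⁻¹ + I * t) with hΦ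
  -- B-side limit
  have hB : Tendsto Φ (𝓝[>] (0:ℝ))
      (𝓝 (∑ r : Fin k, Complex.exp (π * I * ((r:ℕ):ℂ)^2 / k))) := by
    have hsum : Tendsto (fun t : ℝ => ∑ r : Fin k, Complex.exp (π * I * ((r:ℕ):ℂ)^2 / k) *
        jacobiTheta₂ (((((r:ℕ):ℝ) / k : ℝ)) : ℂ) (I * ((1/((k:ℝ)^2*t) : ℝ) : ℂ)))
        (𝓝[>] (0:ℝ)) (𝓝 (∑ r : Fin k, Complex.exp (π * I * ((r:ℕ):ℂ)^2 / k) * 1)) := by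
      refine tendsto_finset_sum _ fun r _ => ?_
      exact Tendsto.const_mul _ ((tendsto_theta₂_one (((r:ℕ):ℝ) / k)).comp hs')
    simp only [mul_one] at hsum
    refine hsum.congr' ?_
    filter_upwards [self_mem_nhdsWithin] with t ht
    exact (keyB k hk hke ht).symm
  -- A-side limit
  have hA : Tendsto Φ (𝓝[>] (0:ℝ))
      (𝓝 (((-I * ((k:ℂ))⁻¹) ^ (1/2 : ℂ))⁻¹)) := by
    have hmem : (-I * ((k:ℂ))⁻¹) ∈ Complex.slitPlane := by
      rw [Complex.mem_slitPlane_iff]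
      right
      have : (-I * ((k:ℂ))⁻¹).im = -((k:ℝ))⁻¹ := by
        rw [show ((k:ℂ))⁻¹ = (((k:ℝ)⁻¹ : ℝ) : ℂ) by push_cast; ring]
        simp
      rw [this]
      simp only [ne_eq, neg_eq_zero, inv_eq_zero]
      positivity
    have hb_ne : (-I * ((k:ℂ))⁻¹) ≠ 0 :=
      mul_ne_zero (neg_ne_zero.mpr I_ne_zero) (inv_ne_zero hkC)
    have hpow_ne : ((-I * ((k:ℂ))⁻¹) ^ (1/2 : ℂ)) ≠ 0 := by
      rw [Ne, cpow_eq_zero_iff, not_and_or]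
      exact Or.inl hb_ne
    have f1 : Tendsto (fun t : ℝ => ((-I * (((k:ℂ))⁻¹ + I * t)) ^ (1/2 : ℂ))⁻¹)
        (𝓝[>] (0:ℝ)) (𝓝 (((-I * ((k:ℂ))⁻¹) ^ (1/2 : ℂ))⁻¹)) := by
      have cb : Tendsto (fun t : ℝ => -I * (((k:ℂ))⁻¹ + I * t)) (𝓝 (0:ℝ))
          (𝓝 (-I * ((k:ℂ))⁻¹)) := by
        have : Continuous (fun t : ℝ => -I * (((k:ℂ))⁻¹ + I * (t:ℂ))) := by continuity
        have h := this.tendsto 0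
        simpa using h
      have hc := (continuousAt_cpow_const (b := (1/2 : ℂ)) hmem).tendsto.comp cb
      exact (hc.inv₀ hpow_ne).mono_left nhdsWithin_le_nhds
    have f2 : Tendsto (fun t : ℝ => (((1 + I * ((k:ℂ) * t))⁻¹) ^ (1/2 : ℂ))⁻¹)
        (𝓝[>] (0:ℝ)) (𝓝 1) := by
      have cb : Tendsto (fun t : ℝ => (1 + I * ((k:ℂ) * t))⁻¹) (𝓝 (0:ℝ)) (𝓝 1) := by
        have hc : Continuous (fun t : ℝ => 1 + I * ((k:ℂ) * (t:ℂ))) := by continuity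
        have h := (hc.tendsto 0).inv₀ (by norm_num)
        simpa using h
      have hc2 := (continuousAt_cpow_const (b := (1/2 : ℂ)) (by simp : (1:ℂ) ∈ Complex.slitPlane)).tendsto.comp cb
      have := hc2.inv₀ (by rw [one_cpow]; norm_num)
      simpa [one_cpow] using this.mono_left nhdsWithin_le_nhds
    have f3 : Tendsto (fun t : ℝ => jacobiTheta (((-(1/k) : ℝ) : ℂ) +
        I * ((1/((k:ℝ)^2*t) : ℝ) : ℂ))) (𝓝[>] (0:ℝ)) (𝓝 1) :=
      (tendsto_theta_one (-(1/k))).comp hs'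
    have := (f1.mul f2).mul f3
    simp only [mul_one] at this
    refine this.congr' ?_
    filter_upwards [self_mem_nhdsWithin] with t ht
    exact (keyA k hk hke ht).symm
  have huniq := tendsto_nhds_unique hB hA
  rw [huniq]
  -- evaluate the constant
  rw [show -I * ((k:ℂ))⁻¹ = (((k:ℝ)⁻¹ : ℝ) : ℂ) * (-I) by push_cast; ring,
    ofReal_mul_cpow (by positivity) (neg_ne_zero.mpr I_ne_zero),
    sqrt_cpow_half _ (by positivity), Real.sqrt_inv,
    cpow_def_of_ne_zero (neg_ne_zero.mpr I_ne_zero), Complex.log_neg_I]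
  rw [mul_inv, ← Complex.exp_neg, Complex.ofReal_inv, inv_inv]
  congr 1
  ring

lemma gauss_eval (k : ℕ) (hk : 0 < k) (hke : Even k) (ε : ℤ) (hε : ε = 1 ∨ ε = -1) :
    ∑ x : Fin k, Complex.exp (π * I / k * ((ε * (x:ℕ)^2 : ℤ) : ℂ))
      = ((Real.sqrt k : ℝ) : ℂ) * Complex.exp ((ε:ℂ) * π * I / 4) := by
  rcases hε with rfl | rfl
  · rw [show (((1:ℤ):ℂ)) * π * I / 4 = π * I / 4 by push_cast; ring, ← gauss_sum_pos k hk hke]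
    refine Finset.sum_congr rfl fun x _ => ?_
    congr 1
    push_cast
    ring
  · have h := congrArg (starRingEnd ℂ) (gauss_sum_pos k hk hke)
    rw [map_sum] at h
    rw [_root_.map_mul] at h
    calc ∑ x : Fin k, Complex.exp (π * I / k * (((-1) * (x:ℕ)^2 : ℤ) : ℂ))
        = ∑ x : Fin k, (starRingEnd ℂ) (Complex.exp (π * I * ((x:ℕ):ℂ)^2 / k)) := by
          refine Finset.sum_congr rfl fun x _ => ?_
          rw [← Complex.exp_conj]
          congr 1
          rw [map_div₀, _root_.map_mul, _root_.map_mul, _root_.map_pow]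
          simp only [Complex.conj_I, Complex.conj_ofReal, Complex.conj_natCast]
          push_cast
          ring
      _ = (starRingEnd ℂ) (((Real.sqrt k : ℝ) : ℂ)) *
            (starRingEnd ℂ) (Complex.exp (π * I / 4)) := h
      _ = ((Real.sqrt k : ℝ) : ℂ) * Complex.exp (((-1:ℤ):ℂ) * π * I / 4) := by
          rw [Complex.conj_ofReal, ← Complex.exp_conj]
          congr 1
          rw [map_div₀, _root_.map_mul]
          simp only [Complex.conj_I, Complex.conj_ofReal, map_ofNat]
          push_cast
          ring

lemma scalar_combine (k : ℕ) (hk : 0 < k) (hke : Even k) (ε : ℤ) (hε : ε = 1 ∨ ε = -1) :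
    ((((k:ℝ) ^ (-(1/2) : ℝ) : ℝ)) : ℂ) * Complex.exp (-((π:ℂ) * I * (ε:ℂ)) / 4) *
      (∑ x : Fin k, Complex.exp (π * I / k * ((ε * (x:ℕ)^2 : ℤ) : ℂ))) = 1 := by
  have hkR : (0:ℝ) < k := by exact_mod_cast hk
  have hsq : Real.sqrt k ≠ 0 := by positivity
  rw [gauss_eval k hk hke ε hε]
  rw [show ((k:ℝ) ^ (-(1/2) : ℝ) : ℝ) = (Real.sqrt k)⁻¹ by
    rw [Real.rpow_neg hkR.le, Real.sqrt_eq_rpow]]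
  rw [Complex.ofReal_inv]
  rw [show (((Real.sqrt k : ℝ):ℂ))⁻¹ * Complex.exp (-((π:ℂ) * I * (ε:ℂ)) / 4) *
      (((Real.sqrt k : ℝ):ℂ) * Complex.exp ((ε:ℂ) * π * I / 4))
      = (((Real.sqrt k : ℝ):ℂ) * (((Real.sqrt k : ℝ):ℂ))⁻¹) *
        (Complex.exp (-((π:ℂ) * I * (ε:ℂ)) / 4) * Complex.exp ((ε:ℂ) * π * I / 4)) by ring]
  rw [mul_inv_cancel₀ (Complex.ofReal_ne_zero.mpr hsq), ← Complex.exp_add,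
    show -((π:ℂ) * I * (ε:ℂ)) / 4 + (ε:ℂ) * π * I / 4 = 0 by ring, Complex.exp_zero, one_mul]


lemma quad_split (m : ℕ) (L : Matrix (Fin m) (Fin m) ℤ) (ε : ℤ)
    (a : Fin m → ℤ) (b : Fin 1 → ℤ) :
    (Sum.elim a b) ⬝ᵥ (Matrix.fromBlocks L 0 0
        (ε • (1 : Matrix (Fin 1) (Fin 1) ℤ))).mulVec (Sum.elim a b)
      = a ⬝ᵥ L.mulVec a + ε * (b 0)^2 := by
  rw [Matrix.fromBlocks_mulVec]
  simp only [Sum.elim_comp_inl, Sum.elim_comp_inr, Matrix.zero_mulVec, add_zero, zero_add,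
    Matrix.smul_mulVec, Matrix.one_mulVec]
  rw [sumElim_dotProduct_sumElim]
  congr 1
  simp [dotProduct, Fin.sum_univ_one, smul_eq_mul]
  ring

lemma sum_split (k : ℕ) (m : ℕ) (L : Matrix (Fin m) (Fin m) ℤ) (ε : ℤ) :
    ∑ g : Fin (m + 1) → Fin k,
        Complex.exp ((Real.pi : ℂ) * Complex.I / (k : ℂ) *
          ((((fun i => ((g i : ℕ) : ℤ)) ⬝ᵥ
              ((Matrix.reindex finSumFinEquiv finSumFinEquiv)
                (Matrix.fromBlocks L 0 0 (ε • (1 : Matrix (Fin 1) (Fin 1) ℤ)))).mulVec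
                fun i => ((g i : ℕ) : ℤ)) : ℤ) : ℂ))
      = (∑ g : Fin m → Fin k,
            Complex.exp ((Real.pi : ℂ) * Complex.I / (k : ℂ) *
              ((((fun i => ((g i : ℕ) : ℤ)) ⬝ᵥ L.mulVec fun i => ((g i : ℕ) : ℤ)) : ℤ) : ℂ))) *
        (∑ x : Fin k,
            Complex.exp ((Real.pi : ℂ) * Complex.I / (k : ℂ) * ((ε * (x:ℕ)^2 : ℤ) : ℂ))) := by
  classical
  set e := (finSumFinEquiv : Fin m ⊕ Fin 1 ≃ Fin (m + 1)) with he_def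
  set Ψ : ((Fin m → Fin k) × Fin k) ≃ (Fin (m + 1) → Fin k) :=
    (Equiv.prodCongr (Equiv.refl (Fin m → Fin k)) (Equiv.funUnique (Fin 1) (Fin k)).symm).trans
      ((Equiv.sumArrowEquivProdArrow (Fin m) (Fin 1) (Fin k)).symm.trans
        (Equiv.arrowCongr e (Equiv.refl (Fin k)))) with hΨ_def
  have hΨ : ∀ (p : (Fin m → Fin k) × Fin k) (j : Fin m ⊕ Fin 1),
      Ψ p (e j) = Sum.elim p.1 (fun _ => p.2) j := by
    intro p j
    cases j <;>
      simp [hΨ_def, Equiv.sumArrowEquivProdArrow, Equiv.arrowCongr, Equiv.funUnique]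
  rw [← Equiv.sum_comp Ψ]
  have hterm : ∀ p : (Fin m → Fin k) × Fin k,
      ((fun i => ((Ψ p i : ℕ) : ℤ)) ⬝ᵥ
          ((Matrix.reindex e e)
            (Matrix.fromBlocks L 0 0 (ε • (1 : Matrix (Fin 1) (Fin 1) ℤ)))).mulVec
            fun i => ((Ψ p i : ℕ) : ℤ))
        = ((fun i => ((p.1 i : ℕ) : ℤ)) ⬝ᵥ L.mulVec fun i => ((p.1 i : ℕ) : ℤ))
          + ε * ((p.2 : ℕ) : ℤ)^2 := by
    intro p
    set w : Fin (m + 1) → ℤ := fun i => ((Ψ p i : ℕ) : ℤ) with hw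
    have hwe : w ∘ e = Sum.elim (fun i => ((p.1 i : ℕ) : ℤ)) (fun _ => ((p.2 : ℕ) : ℤ)) := by
      funext j
      cases j with
      | inl j => simp [hw, Function.comp, hΨ p]
      | inr j => simp [hw, Function.comp, hΨ p]
    rw [Matrix.reindex_apply, Matrix.submatrix_mulVec_equiv]
    have hdot : w ⬝ᵥ (((Matrix.fromBlocks L 0 0 (ε • (1 : Matrix (Fin 1) (Fin 1) ℤ))) *ᵥ
          (w ∘ ⇑e.symm.symm)) ∘ ⇑e.symm)
        = (w ∘ e) ⬝ᵥ ((Matrix.fromBlocks L 0 0 (ε • (1 : Matrix (Fin 1) (Fin 1) ℤ))) *ᵥ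
          (w ∘ e)) := by
      rw [Equiv.symm_symm, dotProduct, dotProduct]
      refine Fintype.sum_equiv e.symm _ _ fun i => ?_
      simp
    rw [hdot, hwe, quad_split]
  calc ∑ p : (Fin m → Fin k) × Fin k,
        Complex.exp ((Real.pi : ℂ) * Complex.I / (k : ℂ) *
          ((((fun i => ((Ψ p i : ℕ) : ℤ)) ⬝ᵥ
              ((Matrix.reindex e e)
                (Matrix.fromBlocks L 0 0 (ε • (1 : Matrix (Fin 1) (Fin 1) ℤ)))).mulVec
                fun i => ((Ψ p i : ℕ) : ℤ)) : ℤ) : ℂ))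
      = ∑ p : (Fin m → Fin k) × Fin k,
          Complex.exp ((Real.pi : ℂ) * Complex.I / (k : ℂ) *
            ((((fun i => ((p.1 i : ℕ) : ℤ)) ⬝ᵥ L.mulVec fun i => ((p.1 i : ℕ) : ℤ)) : ℤ) : ℂ)) *
          Complex.exp ((Real.pi : ℂ) * Complex.I / (k : ℂ) * ((ε * (p.2:ℕ)^2 : ℤ) : ℂ)) := by
        refine Finset.sum_congr rfl fun p _ => ?_
        rw [← Complex.exp_add, hterm p]
        congr 1
        push_cast
        ring
    _ = _ := by
        rw [Fintype.sum_prod_type, Finset.sum_mul_sum]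

end GaussAux
end
end GaussAuxSection

/-- **Invariance of the normalized Abelian surgery invariant under the Kirby
stabilization move `K1`.**  Adjoining an unknot with framing `ε = ±1` to a
surgery presentation with linking matrix `L` changes the Gauss sum and the
signature phase in compensating ways. -/
theorem gauss_sum_stabilization_invariance
    (k : ℕ) (hk : 0 < k) (hke : Even k)
    (m : ℕ) (L : Matrix (Fin m) (Fin m) ℤ) (hL : L.IsSymm)
    (ε : ℤ) (hε : ε = 1 ∨ ε = -1) :
    (((k : ℝ) ^ (-(((m : ℝ) + 2) / 2)) : ℝ) : ℂ)
        * Complex.exp (-((Real.pi : ℂ) * Complex.I *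
            (((intSignature L + ε : ℤ) : ℂ)) / 4))
        * ∑ g : Fin (m + 1) → Fin k,
            Complex.exp ((Real.pi : ℂ) * Complex.I / (k : ℂ) *
              ((((fun i => ((g i : ℕ) : ℤ)) ⬝ᵥ
                  ((Matrix.reindex finSumFinEquiv finSumFinEquiv)
                    (Matrix.fromBlocks L 0 0 (ε • (1 : Matrix (Fin 1) (Fin 1) ℤ)))).mulVec
                    fun i => ((g i : ℕ) : ℤ)) : ℤ) : ℂ))
      = (((k : ℝ) ^ (-(((m : ℝ) + 1) / 2)) : ℝ) : ℂ)
        * Complex.exp (-((Real.pi : ℂ) * Complex.I *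
            ((intSignature L : ℤ) : ℂ) / 4))
        * ∑ g : Fin m → Fin k,
            Complex.exp ((Real.pi : ℂ) * Complex.I / (k : ℂ) *
              ((((fun i => ((g i : ℕ) : ℤ)) ⬝ᵥ
                  L.mulVec fun i => ((g i : ℕ) : ℤ)) : ℤ) : ℂ)) := by
  have hkR : (0:ℝ) < k := by exact_mod_cast hk
  have F1R : ((k:ℝ) ^ (-(((m:ℝ)+2)/2)) : ℝ)
      = (k:ℝ) ^ (-(((m:ℝ)+1)/2)) * (k:ℝ) ^ (-(1/2) : ℝ) := by
    rw [← Real.rpow_add hkR]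
    congr 1
    ring
  have F1C : (((k : ℝ) ^ (-(((m : ℝ) + 2) / 2)) : ℝ) : ℂ)
      = (((k : ℝ) ^ (-(((m : ℝ) + 1) / 2)) : ℝ) : ℂ) * ((((k:ℝ) ^ (-(1/2) : ℝ) : ℝ)) : ℂ) := by
    exact_mod_cast F1R
  have F2 : Complex.exp (-((Real.pi : ℂ) * Complex.I * (((intSignature L + ε : ℤ) : ℂ)) / 4))
      = Complex.exp (-((Real.pi : ℂ) * Complex.I * ((intSignature L : ℤ) : ℂ) / 4)) *
        Complex.exp (-((Real.pi : ℂ) * Complex.I * ((ε : ℤ) : ℂ)) / 4) := by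
    rw [← Complex.exp_add]
    congr 1
    push_cast
    ring
  have hc := GaussAux.scalar_combine k hk hke ε hε
  rw [GaussAux.sum_split k m L ε, F1C, F2]
  linear_combination ((((k : ℝ) ^ (-(((m : ℝ) + 1) / 2)) : ℝ) : ℂ)
        * Complex.exp (-((Real.pi : ℂ) * Complex.I *
            ((intSignature L : ℤ) : ℂ) / 4))
        * ∑ g : Fin m → Fin k,
            Complex.exp ((Real.pi : ℂ) * Complex.I / (k : ℂ) *
              ((((fun i => ((g i : ℕ) : ℤ)) ⬝ᵥ
                  L.mulVec fun i => ((g i : ℕ) : ℤ)) : ℤ) : ℂ))) * hc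
end

section
/- Let k be a positive even integer, L a symmetric m×m integer matrix, and U an m×m integer matrix with det U = ±1 such that Uᵀ L U is block diagonal with upper-left block a symmetric ρ×ρ integer matrix L_reg and lower-right (m−ρ)×(m−ρ) block zero (and zero off-diagonal blocks). Then ∑_{g ∈ {0,…,k−1}^m} exp((π i/k)·gᵀ L g) = k^{m−ρ} · ∑_{h ∈ {0,…,k−1}^ρ} exp((π i/k)·hᵀ L_reg h). -/
open Matrix

/-- Phase `exp(π i n / k)`. -/
noncomputable def gsE (k : ℕ) (n : ℤ) : ℂ :=
  Complex.exp ((Real.pi : ℂ) * Complex.I / (k : ℂ) * (n : ℂ))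

lemma gsE_congr (k : ℕ) (hk : 0 < k) {a b : ℤ} (h : (2 * k : ℤ) ∣ a - b) :
    gsE k a = gsE k b := by
  obtain ⟨c, hc⟩ := h
  have hkC : (k : ℂ) ≠ 0 := Nat.cast_ne_zero.mpr hk.ne'
  have ha : a = b + 2 * k * c := by linarith
  subst ha
  unfold gsE
  push_cast
  rw [mul_add, Complex.exp_add]
  have h2 : (Real.pi : ℂ) * Complex.I / (k : ℂ) * (2 * (k : ℂ) * (c : ℂ))
      = (c : ℂ) * (2 * Real.pi * Complex.I) := by
    field_simp
  rw [h2, Complex.exp_int_mul_two_pi_mul_I, mul_one]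

lemma gsE_quad_congr {ι : Type*} [Fintype ι] (k : ℕ) (hk : 0 < k) (hke : Even k)
    (L : Matrix ι ι ℤ) (hL : L.IsSymm) (x y : ι → ℤ)
    (h : ∀ i, (k : ℤ) ∣ x i - y i) :
    gsE k (x ⬝ᵥ L.mulVec x) = gsE k (y ⬝ᵥ L.mulVec y) := by
  choose d hd using h
  have hx : x = y + (k : ℤ) • d := by
    funext i
    have := hd i
    simp only [Pi.add_apply, Pi.smul_apply, smul_eq_mul]
    linarith
  apply gsE_congr k hk
  subst hx
  have hsym : y ᵥ* L = L *ᵥ y := by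
    nth_rewrite 1 [← hL]
    rw [Matrix.vecMul_transpose]
  have hsym2 : y ⬝ᵥ L.mulVec d = d ⬝ᵥ L.mulVec y := by
    rw [Matrix.dotProduct_mulVec, hsym, dotProduct_comm]
  obtain ⟨t, ht⟩ := hke
  refine ⟨d ⬝ᵥ L.mulVec y + t * (d ⬝ᵥ L.mulVec d), ?_⟩
  have expand : (y + (k : ℤ) • d) ⬝ᵥ L.mulVec (y + (k : ℤ) • d) - y ⬝ᵥ L.mulVec y
      = 2 * (k : ℤ) * (d ⬝ᵥ L.mulVec y) + (k : ℤ) ^ 2 * (d ⬝ᵥ L.mulVec d) := by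
    simp only [Matrix.mulVec_add, Matrix.mulVec_smul, dotProduct_add, add_dotProduct,
      smul_dotProduct, dotProduct_smul, smul_eq_mul, hsym2]
    ring
  have hkt : (k : ℤ) = 2 * (t : ℤ) := by subst ht; push_cast; ring
  rw [expand, hkt]; ring

lemma cast_mulVec {n : ℕ} {ι : Type*} [Fintype ι] (M : Matrix ι ι ℤ) (v : ι → ℤ) (i : ι) :
    ((M.mulVec v i : ℤ) : ZMod n)
      = (M.map (Int.cast : ℤ → ZMod n)).mulVec (fun j => ((v j : ℤ) : ZMod n)) i := by
  simp [Matrix.mulVec, dotProduct]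

def finZModEquiv (k : ℕ) [NeZero k] : Fin k ≃ ZMod k where
  toFun a := ((a : ℕ) : ZMod k)
  invFun z := ⟨z.val, ZMod.val_lt z⟩
  left_inv a := Fin.ext (ZMod.val_cast_of_lt a.is_lt)
  right_inv z := ZMod.natCast_rightInverse z

lemma finZModEquiv_val (k : ℕ) [NeZero k] (a : Fin k) : (finZModEquiv k a).val = (a : ℕ) :=
  ZMod.val_cast_of_lt a.is_lt

lemma sum_fin_eq_sum_zmod (k : ℕ) [NeZero k] {ι : Type*} [Fintype ι] [DecidableEq ι] (F : (ι → ℤ) → ℂ) :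
    ∑ g : ι → Fin k, F (fun i => ((g i : ℕ) : ℤ))
      = ∑ g : ι → ZMod k, F (fun i => (((g i).val : ℕ) : ℤ)) :=
  Fintype.sum_equiv (Equiv.piCongrRight fun _ => finZModEquiv k) _ _ (fun g => by
    congr 1
    funext i
    simp [Equiv.piCongrRight, finZModEquiv_val])

/-- **Factorization of the degenerate Gauss sum over the null directions.**
If `Uᵀ L U` is block diagonal with nondegenerate-free upper-left block `L_reg`
of size `ρ` and zero lower-right block of size `ν` (so `m = ρ + ν`), then the
level-`k` Gauss sum of `L` equals `k^ν` times the Gauss sum of `L_reg`. -/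
theorem gauss_sum_null_factorization
    (k : ℕ) (hk : 0 < k) (hke : Even k)
    (ρ ν : ℕ)
    (L U : Matrix (Fin ρ ⊕ Fin ν) (Fin ρ ⊕ Fin ν) ℤ)
    (hL : L.IsSymm)
    (hU : U.det = 1 ∨ U.det = -1)
    (Lreg : Matrix (Fin ρ) (Fin ρ) ℤ) (hLreg : Lreg.IsSymm)
    (hblock : Uᵀ * L * U = Matrix.fromBlocks Lreg 0 0 0) :
    (∑ g : (Fin ρ ⊕ Fin ν) → Fin k,
        Complex.exp ((Real.pi : ℂ) * Complex.I / (k : ℂ) *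
          ((((fun i => ((g i : ℕ) : ℤ)) ⬝ᵥ
              L.mulVec fun i => ((g i : ℕ) : ℤ)) : ℤ) : ℂ)))
      = (k : ℂ) ^ ν *
          ∑ h : Fin ρ → Fin k,
            Complex.exp ((Real.pi : ℂ) * Complex.I / (k : ℂ) *
              ((((fun i => ((h i : ℕ) : ℤ)) ⬝ᵥ
                  Lreg.mulVec fun i => ((h i : ℕ) : ℤ)) : ℤ) : ℂ)) := by
  haveI : NeZero k := ⟨hk.ne'⟩
  -- rewrite both sides as gsE sums
  have lhs_eq : (∑ g : (Fin ρ ⊕ Fin ν) → Fin k,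
        Complex.exp ((Real.pi : ℂ) * Complex.I / (k : ℂ) *
          ((((fun i => ((g i : ℕ) : ℤ)) ⬝ᵥ
              L.mulVec fun i => ((g i : ℕ) : ℤ)) : ℤ) : ℂ)))
      = ∑ g : (Fin ρ ⊕ Fin ν) → Fin k,
          gsE k ((fun i => ((g i : ℕ) : ℤ)) ⬝ᵥ L.mulVec fun i => ((g i : ℕ) : ℤ)) := rfl
  have rhs_eq : (∑ h : Fin ρ → Fin k,
        Complex.exp ((Real.pi : ℂ) * Complex.I / (k : ℂ) *
          ((((fun i => ((h i : ℕ) : ℤ)) ⬝ᵥ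
              Lreg.mulVec fun i => ((h i : ℕ) : ℤ)) : ℤ) : ℂ)))
      = ∑ h : Fin ρ → Fin k,
          gsE k ((fun i => ((h i : ℕ) : ℤ)) ⬝ᵥ Lreg.mulVec fun i => ((h i : ℕ) : ℤ)) := rfl
  rw [lhs_eq, rhs_eq]
  rw [sum_fin_eq_sum_zmod k (fun v => gsE k (v ⬝ᵥ L.mulVec v)),
      sum_fin_eq_sum_zmod k (fun v => gsE k (v ⬝ᵥ Lreg.mulVec v))]
  -- the mod-k matrix and its invertibility
  set A : Matrix (Fin ρ ⊕ Fin ν) (Fin ρ ⊕ Fin ν) (ZMod k) :=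
    U.map (Int.cast : ℤ → ZMod k) with hA
  have hAdet : IsUnit A.det := by
    have hmap : A = (Int.castRingHom (ZMod k)).mapMatrix U := rfl
    rw [hmap, ← RingHom.map_det]
    rcases hU with h | h
    · rw [h]; exact (isUnit_one).map _
    · rw [h]; exact (IsUnit.neg isUnit_one).map _
  haveI := A.invertibleOfIsUnitDet hAdet
  let eU : ((Fin ρ ⊕ Fin ν) → ZMod k) ≃ ((Fin ρ ⊕ Fin ν) → ZMod k) :=
    { toFun := fun g => A.mulVec g
      invFun := fun g => (⅟A).mulVec g
      left_inv := fun g => by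
        show (⅟A).mulVec (A.mulVec g) = g
        rw [Matrix.mulVec_mulVec, invOf_mul_self, Matrix.one_mulVec]
      right_inv := fun g => by
        show A.mulVec ((⅟A).mulVec g) = g
        rw [Matrix.mulVec_mulVec, mul_invOf_self, Matrix.one_mulVec] }
  rw [← Equiv.sum_comp eU
    (fun g : (Fin ρ ⊕ Fin ν) → ZMod k =>
      gsE k ((fun i => (((g i).val : ℕ) : ℤ)) ⬝ᵥ L.mulVec fun i => (((g i).val : ℕ) : ℤ)))]
  -- pointwise identification
  have key : ∀ g : (Fin ρ ⊕ Fin ν) → ZMod k,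
      gsE k ((fun i => (((eU g i).val : ℕ) : ℤ)) ⬝ᵥ
          L.mulVec fun i => (((eU g i).val : ℕ) : ℤ))
        = gsE k ((fun i => (((g (Sum.inl i)).val : ℕ) : ℤ)) ⬝ᵥ
            Lreg.mulVec fun i => (((g (Sum.inl i)).val : ℕ) : ℤ)) := by
    intro g
    set x : (Fin ρ ⊕ Fin ν) → ℤ := fun i => (((eU g i).val : ℕ) : ℤ) with hx
    set w : (Fin ρ ⊕ Fin ν) → ℤ := fun i => (((g i).val : ℕ) : ℤ) with hw
    have hcong : ∀ i, (k : ℤ) ∣ x i - (U.mulVec w) i := by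
      intro i
      have : ((x i - (U.mulVec w) i : ℤ) : ZMod k) = 0 := by
        push_cast
        rw [cast_mulVec U w i]
        have h1 : ((x i : ℤ) : ZMod k) = eU g i := by
          rw [hx]
          push_cast
          exact ZMod.natCast_rightInverse _
        have h2 : (fun j => ((w j : ℤ) : ZMod k)) = g := by
          funext j
          rw [hw]
          push_cast
          exact ZMod.natCast_rightInverse _
        rw [h1, h2]
        show A.mulVec g i - _ = 0
        rw [hA, sub_self]
      exact (ZMod.intCast_zmod_eq_zero_iff_dvd _ k).mp this
    have step1 : gsE k (x ⬝ᵥ L.mulVec x)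
        = gsE k ((U.mulVec w) ⬝ᵥ L.mulVec (U.mulVec w)) :=
      gsE_quad_congr k hk hke L hL x (U.mulVec w) hcong
    have step2 : (U.mulVec w) ⬝ᵥ L.mulVec (U.mulVec w)
        = w ⬝ᵥ (Uᵀ * L * U).mulVec w := by
      rw [← Matrix.mulVec_mulVec, ← Matrix.mulVec_mulVec,
        Matrix.dotProduct_mulVec w Uᵀ, Matrix.vecMul_transpose]
    have step3 : w ⬝ᵥ (Uᵀ * L * U).mulVec w
        = (w ∘ Sum.inl) ⬝ᵥ Lreg.mulVec (w ∘ Sum.inl) := by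
      rw [hblock]
      simp [Matrix.mulVec, dotProduct, Fintype.sum_sum_type, Matrix.fromBlocks,
        Function.comp]
    rw [step1, step2, step3]
    rfl
  simp only [key]
  -- split the sum over the direct sum of coordinates
  rw [← Equiv.sum_comp (Equiv.sumArrowEquivProdArrow (Fin ρ) (Fin ν) (ZMod k)).symm
    (fun g : (Fin ρ ⊕ Fin ν) → ZMod k =>
      gsE k ((fun i => (((g (Sum.inl i)).val : ℕ) : ℤ)) ⬝ᵥ
        Lreg.mulVec fun i => (((g (Sum.inl i)).val : ℕ) : ℤ)))]
  have hcomp : ∀ p : (Fin ρ → ZMod k) × (Fin ν → ZMod k), ∀ i : Fin ρ,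
      (Equiv.sumArrowEquivProdArrow (Fin ρ) (Fin ν) (ZMod k)).symm p (Sum.inl i) = p.1 i := by
    intro p i; rfl
  simp only [hcomp]
  rw [Fintype.sum_prod_type]
  simp only [Finset.sum_const, Finset.card_univ, nsmul_eq_mul, ← Finset.mul_sum]
  congr 1
  simp [ZMod.card]
end
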